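/- The homogeneous polynomial F ∈ ℂ[z₀, z₁, z₂, z₃] of degree 9 given by F = z₂⁹ − 5z₀z₂⁷z₃ + 2z₁z₂⁷z₃ + 4z₂⁸z₃ + 6z₀²z₂⁵z₃² − 5z₀z₁z₂⁵z₃² + z₁²z₂⁵z₃² − 11z₀z₂⁶z₃² + 6z₁z₂⁶z₃² + 6z₂⁷z₃² + z₀³z₂³z₃³ + 9z₀²z₂⁴z₃³ − 11z₀z₁z₂⁴z₃³ + 3z₁²z₂⁴z₃³ − 7z₀z₂⁵z₃³ + 6z₁z₂⁵z₃³ + 2z₂⁶z₃³ + 3z₀²z₂³z₃⁴ − 7z₀z₁z₂³z₃⁴ + 3z₁²z₂³z₃⁴ + 4z₀z₂⁴z₃⁴ − 5z₂⁵z₃⁴ − z₀z₁z₂²z₃⁵ + z₁²z₂²z₃⁵ + 11z₀z₂³z₃⁵ − 6z₁z₂³z₃⁵ − 5z₂⁴z₃⁵ + 7z₀z₂²z₃⁶ − 6z₁z₂²z₃⁶ + 2z₂³z₃⁶ + z₀z₂z₃⁷ − 2z₁z₂z₃⁷ + 6z₂²z₃⁷ + 4z₂z₃⁸ + z₃⁹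 is irreducible in ℂ[z₀, z₁, z₂, z₃]. -/

import Mathlib

open MvPolynomial

set_option maxHeartbeats 1000000

/-- The degree-9 homogeneous polynomial `F ∈ ℂ[z₀,z₁,z₂,z₃]` defining the image of the
tricanonical map, with `X 0 = z₀`, `X 1 = z₁`, `X 2 = z₂`, `X 3 = z₃`. -/
noncomputable def tricanF : MvPolynomial (Fin 4) ℂ :=
  (X 2) ^ 9
  - 5 * (X 0 * (X 2) ^ 7 * X 3) + 2 * (X 1 * (X 2) ^ 7 * X 3) + 4 * ((X 2) ^ 8 * X 3)
  + 6 * ((X 0) ^ 2 * (X 2) ^ 5 * (X 3) ^ 2) - 5 * (X 0 * X 1 * (X 2) ^ 5 * (X 3) ^ 2)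
  + (X 1) ^ 2 * (X 2) ^ 5 * (X 3) ^ 2 - 11 * (X 0 * (X 2) ^ 6 * (X 3) ^ 2)
  + 6 * (X 1 * (X 2) ^ 6 * (X 3) ^ 2) + 6 * ((X 2) ^ 7 * (X 3) ^ 2)
  + (X 0) ^ 3 * (X 2) ^ 3 * (X 3) ^ 3 + 9 * ((X 0) ^ 2 * (X 2) ^ 4 * (X 3) ^ 3)
  - 11 * (X 0 * X 1 * (X 2) ^ 4 * (X 3) ^ 3) + 3 * ((X 1) ^ 2 * (X 2) ^ 4 * (X 3) ^ 3)
  - 7 * (X 0 * (X 2) ^ 5 * (X 3) ^ 3) + 6 * (X 1 * (X 2) ^ 5 * (X 3) ^ 3)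
  + 2 * ((X 2) ^ 6 * (X 3) ^ 3)
  + 3 * ((X 0) ^ 2 * (X 2) ^ 3 * (X 3) ^ 4) - 7 * (X 0 * X 1 * (X 2) ^ 3 * (X 3) ^ 4)
  + 3 * ((X 1) ^ 2 * (X 2) ^ 3 * (X 3) ^ 4) + 4 * (X 0 * (X 2) ^ 4 * (X 3) ^ 4)
  - 5 * ((X 2) ^ 5 * (X 3) ^ 4)
  - X 0 * X 1 * (X 2) ^ 2 * (X 3) ^ 5 + (X 1) ^ 2 * (X 2) ^ 2 * (X 3) ^ 5
  + 11 * (X 0 * (X 2) ^ 3 * (X 3) ^ 5) - 6 * (X 1 * (X 2) ^ 3 * (X 3) ^ 5)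
  - 5 * ((X 2) ^ 4 * (X 3) ^ 5)
  + 7 * (X 0 * (X 2) ^ 2 * (X 3) ^ 6) - 6 * (X 1 * (X 2) ^ 2 * (X 3) ^ 6)
  + 2 * ((X 2) ^ 3 * (X 3) ^ 6)
  + X 0 * X 2 * (X 3) ^ 7 - 2 * (X 1 * X 2 * (X 3) ^ 7) + 6 * ((X 2) ^ 2 * (X 3) ^ 7)
  + 4 * (X 2 * (X 3) ^ 8) + (X 3) ^ 9

set_option maxRecDepth 10000

namespace TricanAux

/-- `A`: coefficient of `z₁²` in `F`, in variables `X0 = z₀, X1 = z₂, X2 = z₃`. -/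
noncomputable def pA : MvPolynomial (Fin 3) ℂ :=
  X 1^5*X 2^2 + 3*(X 1^4*X 2^3) + 3*(X 1^3*X 2^4) + X 1^2*X 2^5

/-- `B`: coefficient of `z₁` in `F`. -/
noncomputable def pB : MvPolynomial (Fin 3) ℂ :=
  -(5*(X 0*X 1^5*X 2^2)) - 11*(X 0*X 1^4*X 2^3) - 7*(X 0*X 1^3*X 2^4) - X 0*X 1^2*X 2^5
  + 2*(X 1^7*X 2) + 6*(X 1^6*X 2^2) + 6*(X 1^5*X 2^3) - 6*(X 1^3*X 2^5)
  - 6*(X 1^2*X 2^6) - 2*(X 1*X 2^7)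

/-- `C₀`: coefficient of `z₁⁰` in `F`. -/
noncomputable def pC : MvPolynomial (Fin 3) ℂ :=
  X 0^3*X 1^3*X 2^3 + 6*(X 0^2*X 1^5*X 2^2) + 9*(X 0^2*X 1^4*X 2^3) + 3*(X 0^2*X 1^3*X 2^4)
  - 5*(X 0*X 1^7*X 2) - 11*(X 0*X 1^6*X 2^2) - 7*(X 0*X 1^5*X 2^3) + 4*(X 0*X 1^4*X 2^4)
  + 11*(X 0*X 1^3*X 2^5) + 7*(X 0*X 1^2*X 2^6) + X 0*X 1*X 2^7
  + X 1^9 + 4*(X 1^8*X 2) + 6*(X 1^7*X 2^2) + 2*(X 1^6*X 2^3) - 5*(X 1^5*X 2^4)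
  - 5*(X 1^4*X 2^5) + 2*(X 1^3*X 2^6) + 6*(X 1^2*X 2^7) + 4*(X 1*X 2^8) + X 2^9

/-- `F` as a quadratic in `z₁`. -/
noncomputable def P : Polynomial (MvPolynomial (Fin 3) ℂ) :=
  Polynomial.C pA * Polynomial.X ^ 2 + Polynomial.C pB * Polynomial.X + Polynomial.C pC

/-- Split off the variable `z₁`. -/
noncomputable def e : MvPolynomial (Fin 4) ℂ ≃ₐ[ℂ] Polynomial (MvPolynomial (Fin 3) ℂ) :=
  (renameEquiv ℂ (Equiv.swap 0 1)).trans (finSuccEquiv ℂ 3)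

lemma e_X0 : e (X 0) = Polynomial.C (X 0) := by
  have h1 : Equiv.swap (0 : Fin 4) 1 0 = 1 := by decide
  simp only [e, AlgEquiv.trans_apply, renameEquiv_apply, rename_X, h1]
  rw [show ((1 : Fin 4)) = Fin.succ 0 from rfl]
  exact finSuccEquiv_X_succ

lemma e_X1 : e (X 1) = Polynomial.X := by
  have h1 : Equiv.swap (0 : Fin 4) 1 1 = 0 := by decide
  simp only [e, AlgEquiv.trans_apply, renameEquiv_apply, rename_X, h1]
  exact finSuccEquiv_X_zero

lemma e_X2 : e (X 2) = Polynomial.C (X 1) := by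
  have h1 : Equiv.swap (0 : Fin 4) 1 2 = 2 := by decide
  simp only [e, AlgEquiv.trans_apply, renameEquiv_apply, rename_X, h1]
  rw [show ((2 : Fin 4)) = Fin.succ 1 from rfl]
  exact finSuccEquiv_X_succ

lemma e_X3 : e (X 3) = Polynomial.C (X 2) := by
  have h1 : Equiv.swap (0 : Fin 4) 1 3 = 3 := by decide
  simp only [e, AlgEquiv.trans_apply, renameEquiv_apply, rename_X, h1]
  rw [show ((3 : Fin 4)) = Fin.succ 2 from rfl]
  exact finSuccEquiv_X_succ

lemma heF : e tricanF = P := by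
  rw [tricanF, P, pA, pB, pC]
  simp only [map_add, map_sub, map_mul, map_pow, map_ofNat, map_one, map_neg,
    e_X0, e_X1, e_X2, e_X3]
  ring

lemma hA_ne : pA ≠ 0 := by
  intro h
  have h8 := congrArg (aeval ![(0 : ℂ), 1, 1]) h
  simp [pA, map_ofNat] at h8
  norm_num at h8

lemma hPdeg : P.natDegree = 2 := Polynomial.natDegree_quadratic hA_ne



lemma quad_coeff2 (a b c : MvPolynomial (Fin 3) ℂ) :
    (Polynomial.C a * Polynomial.X ^ 2 + Polynomial.C b * Polynomial.X
      + Polynomial.C c).coeff 2 = a := by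
  simp only [Polynomial.coeff_add, Polynomial.coeff_C_mul, Polynomial.coeff_X_pow,
    Polynomial.coeff_C, Polynomial.coeff_X]
  norm_num

lemma quad_coeff1 (a b c : MvPolynomial (Fin 3) ℂ) :
    (Polynomial.C a * Polynomial.X ^ 2 + Polynomial.C b * Polynomial.X
      + Polynomial.C c).coeff 1 = b := by
  simp only [Polynomial.coeff_add, Polynomial.coeff_C_mul, Polynomial.coeff_X_pow,
    Polynomial.coeff_C, Polynomial.coeff_X]
  norm_num

lemma quad_coeff0 (a b c : MvPolynomial (Fin 3) ℂ) :
    (Polynomial.C a * Polynomial.X ^ 2 + Polynomial.C b * Polynomial.X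
      + Polynomial.C c).coeff 0 = c := by
  simp only [Polynomial.coeff_add, Polynomial.coeff_C_mul, Polynomial.coeff_X_pow,
    Polynomial.coeff_C, Polynomial.coeff_X]
  norm_num

lemma hP_coeff2 : P.coeff 2 = pA := quad_coeff2 _ _ _
lemma hP_coeff1 : P.coeff 1 = pB := quad_coeff1 _ _ _
lemma hP_coeff0 : P.coeff 0 = pC := quad_coeff0 _ _ _

/-- Split off the variable `z₂` from the 3-variable ring. -/
noncomputable def e2 : MvPolynomial (Fin 3) ℂ ≃ₐ[ℂ] Polynomial (MvPolynomial (Fin 2) ℂ) :=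
  (renameEquiv ℂ (Equiv.swap 0 1)).trans (finSuccEquiv ℂ 2)

/-- Split off the variable `z₃` from the 3-variable ring. -/
noncomputable def e3 : MvPolynomial (Fin 3) ℂ ≃ₐ[ℂ] Polynomial (MvPolynomial (Fin 2) ℂ) :=
  (renameEquiv ℂ (Equiv.swap 0 2)).trans (finSuccEquiv ℂ 2)

lemma prime_X1 : Prime (X 1 : MvPolynomial (Fin 3) ℂ) := by
  rw [← MulEquiv.prime_iff e2.toMulEquiv]
  have : e2 (X 1) = Polynomial.X := by
    have h1 : Equiv.swap (0 : Fin 3) 1 1 = 0 := by decide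
    simp only [e2, AlgEquiv.trans_apply, renameEquiv_apply, rename_X, h1]
    exact finSuccEquiv_X_zero
  rw [show e2.toMulEquiv (X 1) = e2 (X 1) from rfl, this]
  exact Polynomial.prime_X

lemma prime_X2 : Prime (X 2 : MvPolynomial (Fin 3) ℂ) := by
  rw [← MulEquiv.prime_iff e3.toMulEquiv]
  have : e3 (X 2) = Polynomial.X := by
    have h1 : Equiv.swap (0 : Fin 3) 2 2 = 0 := by decide
    simp only [e3, AlgEquiv.trans_apply, renameEquiv_apply, rename_X, h1]
    exact finSuccEquiv_X_zero
  rw [show e3.toMulEquiv (X 2) = e3 (X 2) from rfl, this]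
  exact Polynomial.prime_X

lemma prime_X1_add_X2 : Prime (X 1 + X 2 : MvPolynomial (Fin 3) ℂ) := by
  rw [← MulEquiv.prime_iff e2.toMulEquiv]
  have h2 : ((2 : Fin 3)) = Fin.succ 1 := rfl
  have hsw : Equiv.swap (0 : Fin 3) 1 2 = 2 := by decide
  have : e2 ((X 1 : MvPolynomial (Fin 3) ℂ) + X 2)
      = Polynomial.X - Polynomial.C (-(X 1)) := by
    have h1 : Equiv.swap (0 : Fin 3) 1 1 = 0 := by decide
    have hX : e2 (X 1) = Polynomial.X := by
      simp only [e2, AlgEquiv.trans_apply, renameEquiv_apply, rename_X, h1]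
      exact finSuccEquiv_X_zero
    have hX2 : e2 (X 2) = Polynomial.C (X 1) := by
      simp only [e2, AlgEquiv.trans_apply, renameEquiv_apply, rename_X, hsw]
      rw [show ((2 : Fin 3)) = Fin.succ 1 from rfl]
      exact finSuccEquiv_X_succ
    rw [map_add, hX, hX2, map_neg, sub_neg_eq_add]
  rw [show e2.toMulEquiv ((X 1 : MvPolynomial (Fin 3) ℂ) + X 2) = e2 (X 1 + X 2) from rfl, this]
  exact Polynomial.prime_X_sub_C _

lemma not_X1_dvd_pC : ¬ (X 1 : MvPolynomial (Fin 3) ℂ) ∣ pC := by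
  rintro ⟨m, hm⟩
  have h := congrArg (aeval ![(X 0 : MvPolynomial (Fin 2) ℂ), 0, X 1]) hm
  simp [pC, map_ofNat] at h

lemma not_X2_dvd_pC : ¬ (X 2 : MvPolynomial (Fin 3) ℂ) ∣ pC := by
  rintro ⟨m, hm⟩
  have h := congrArg (aeval ![(X 0 : MvPolynomial (Fin 2) ℂ), X 1, 0]) hm
  simp [pC, map_ofNat] at h

lemma not_X1_add_X2_dvd_pC : ¬ (X 1 + X 2 : MvPolynomial (Fin 3) ℂ) ∣ pC := by
  rintro ⟨m, hm⟩
  have h := congrArg (aeval ![(X 0 : MvPolynomial (Fin 2) ℂ), X 1, -(X 1)]) hm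
  have hval : (aeval ![(X 0 : MvPolynomial (Fin 2) ℂ), X 1, -(X 1)]) pC
      = -(X 0^3 * X 1^6) := by
    simp [pC, map_ofNat]
    all_goals ring
  have hz : (aeval ![(X 0 : MvPolynomial (Fin 2) ℂ), X 1, -(X 1)])
      ((X 1 : MvPolynomial (Fin 3) ℂ) + X 2) = 0 := by simp
  rw [hval, map_mul, hz, zero_mul] at h
  have : (X 0 : MvPolynomial (Fin 2) ℂ)^3 * X 1^6 ≠ 0 :=
    mul_ne_zero (pow_ne_zero _ (X_ne_zero _)) (pow_ne_zero _ (X_ne_zero _))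
  exact this (by linear_combination -h)

lemma pA_eq : pA = (X 1 : MvPolynomial (Fin 3) ℂ)^2 * X 2^2 * (X 1 + X 2)^3 := by
  rw [pA]; ring

/-- Any common divisor of `A` and `C₀` is a unit. -/
lemma key {g : MvPolynomial (Fin 3) ℂ} (h1 : g ∣ pA) (h2 : g ∣ pC) : IsUnit g := by
  by_contra hg
  have hg0 : g ≠ 0 := by
    rintro rfl
    exact hA_ne (zero_dvd_iff.mp h1)
  obtain ⟨p, hpi, hpg⟩ := WfDvdMonoid.exists_irreducible_factor hg hg0
  have hpA : p ∣ (X 1 : MvPolynomial (Fin 3) ℂ)^2 * X 2^2 * (X 1 + X 2)^3 := by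
    rw [← pA_eq]; exact hpg.trans h1
  have hp : Prime p := UniqueFactorizationMonoid.irreducible_iff_prime.mp hpi
  have hcases : p ∣ (X 1 : MvPolynomial (Fin 3) ℂ) ∨ p ∣ (X 2 : MvPolynomial (Fin 3) ℂ)
      ∨ p ∣ (X 1 + X 2 : MvPolynomial (Fin 3) ℂ) := by
    rcases hp.dvd_mul.mp hpA with h | h
    · rcases hp.dvd_mul.mp h with h' | h'
      · exact Or.inl (hp.dvd_of_dvd_pow h')
      · exact Or.inr (Or.inl (hp.dvd_of_dvd_pow h'))
    · exact Or.inr (Or.inr (hp.dvd_of_dvd_pow h))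
  rcases hcases with h | h | h
  · exact not_X1_dvd_pC (((hpi.dvd_symm prime_X1.irreducible) h).trans (hpg.trans h2))
  · exact not_X2_dvd_pC (((hpi.dvd_symm prime_X2.irreducible) h).trans (hpg.trans h2))
  · exact not_X1_add_X2_dvd_pC
      (((hpi.dvd_symm prime_X1_add_X2.irreducible) h).trans (hpg.trans h2))

/-- The specialization `z₀ ↦ t, z₂ ↦ 1, z₃ ↦ 1`. -/
noncomputable def σ : MvPolynomial (Fin 3) ℂ →ₐ[ℂ] Polynomial ℂ :=
  aeval ![Polynomial.X, 1, 1]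

lemma hσΔ : (σ pB)^2 - 4 * (σ pA * σ pC) = -32 * Polynomial.X^3 - 512 := by
  have hA : σ pA = 8 := by
    simp [σ, pA, map_ofNat]
    all_goals norm_num
  have hB : σ pB = -24 * Polynomial.X := by
    simp [σ, pB, map_ofNat]
    all_goals ring
  have hC : σ pC = Polynomial.X^3 + 18 * Polynomial.X^2 + 16 := by
    simp [σ, pC, map_ofNat]
    all_goals ring
  rw [hA, hB, hC]; ring

/-- No factorization into two factors that are both linear in `z₁`. -/
lemma no_linear_split {G H : Polynomial (MvPolynomial (Fin 3) ℂ)}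
    (hGH : P = G * H) (hG : G.natDegree = 1) (hH : H.natDegree = 1) : False := by
  set g1 := G.coeff 1 with hg1
  set g0 := G.coeff 0 with hg0
  set h1 := H.coeff 1 with hh1
  set h0 := H.coeff 0 with hh0
  have hGe : G = Polynomial.C g1 * Polynomial.X + Polynomial.C g0 :=
    Polynomial.eq_X_add_C_of_natDegree_le_one hG.le
  have hHe : H = Polynomial.C h1 * Polynomial.X + Polynomial.C h0 :=
    Polynomial.eq_X_add_C_of_natDegree_le_one hH.le
  have hPf : P = Polynomial.C (g1 * h1) * Polynomial.X ^ 2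
      + Polynomial.C (g1 * h0 + g0 * h1) * Polynomial.X + Polynomial.C (g0 * h0) := by
    rw [hGH, hGe, hHe]
    simp only [map_mul, map_add]
    ring
  have eA : pA = g1 * h1 := by
    rw [← hP_coeff2, hPf, quad_coeff2]
  have eB : pB = g1 * h0 + g0 * h1 := by
    rw [← hP_coeff1, hPf, quad_coeff1]
  have eC : pC = g0 * h0 := by
    rw [← hP_coeff0, hPf, quad_coeff0]
  have hΔ : pB^2 - 4 * (pA * pC) = (g1 * h0 - g0 * h1)^2 := by
    rw [eA, eB, eC]; ring
  set w : Polynomial ℂ := σ (g1 * h0 - g0 * h1) with hw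
  have hw2 : w^2 = -32 * Polynomial.X^3 - 512 := by
    have := congrArg σ hΔ
    rw [map_pow] at this
    rw [← hw] at this
    rw [← this, ← hσΔ]
    simp [map_sub, map_mul, map_pow, map_ofNat]
  have hw0 : w ≠ 0 := by
    intro h0'
    rw [h0'] at hw2
    have h512 := congrArg (Polynomial.eval 0) hw2
    simp at h512
  have hcube : (-32 * Polynomial.X^3 - 512 : Polynomial ℂ)
      = Polynomial.C (-32) * Polynomial.X^3 + Polynomial.C 0 * Polynomial.X^2
        + Polynomial.C 0 * Polynomial.X + Polynomial.C (-512) := by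
    simp only [map_neg, map_zero, map_ofNat]
    ring
  have hdeg3 : (w^2).natDegree = 3 := by
    rw [hw2, hcube]
    exact Polynomial.natDegree_cubic (by norm_num)
  rw [Polynomial.natDegree_pow] at hdeg3
  omega

lemma irreducible_P : Irreducible P := by
  have hP0 : P ≠ 0 := fun h => by
    have h2 := hPdeg
    rw [h] at h2
    simp at h2
  constructor
  · intro hu
    have := Polynomial.natDegree_eq_zero_of_isUnit hu
    rw [hPdeg] at this
    exact absurd this (by norm_num)
  · intro G H hGH
    have hG0 : G ≠ 0 := fun h => hP0 (by rw [hGH, h, zero_mul])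
    have hH0 : H ≠ 0 := fun h => hP0 (by rw [hGH, h, mul_zero])
    have hdeg : G.natDegree + H.natDegree = 2 := by
      rw [← Polynomial.natDegree_mul hG0 hH0, ← hGH, hPdeg]
    rcases (by omega : G.natDegree = 0 ∨ H.natDegree = 0
        ∨ (G.natDegree = 1 ∧ H.natDegree = 1)) with h | h | ⟨h1, h2⟩
    · left
      obtain ⟨g, hg⟩ := Polynomial.natDegree_eq_zero.mp h
      have hdA : g ∣ pA := by
        refine ⟨H.coeff 2, ?_⟩
        rw [← hP_coeff2, hGH, ← hg, Polynomial.coeff_C_mul]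
      have hdC : g ∣ pC := by
        refine ⟨H.coeff 0, ?_⟩
        rw [← hP_coeff0, hGH, ← hg, Polynomial.coeff_C_mul]
      rw [← hg]
      exact Polynomial.isUnit_C.mpr (key hdA hdC)
    · right
      obtain ⟨c, hc⟩ := Polynomial.natDegree_eq_zero.mp h
      have hdA : c ∣ pA := by
        refine ⟨G.coeff 2, ?_⟩
        rw [← hP_coeff2, hGH, ← hc, mul_comm, Polynomial.coeff_C_mul]
      have hdC : c ∣ pC := by
        refine ⟨G.coeff 0, ?_⟩
        rw [← hP_coeff0, hGH, ← hc, mul_comm, Polynomial.coeff_C_mul]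
      rw [← hc]
      exact Polynomial.isUnit_C.mpr (key hdA hdC)
    · exact absurd hGH (fun hGH => no_linear_split hGH h1 h2)

end TricanAux

/-- The degree-9 polynomial `F` is irreducible in `ℂ[z₀,z₁,z₂,z₃]`. -/
theorem stmt_9 : Irreducible tricanF := by
  have h : Irreducible (TricanAux.e tricanF) := by
    rw [TricanAux.heF]
    exact TricanAux.irreducible_P
  exact (MulEquiv.irreducible_iff TricanAux.e).mp h
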